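/- arXiv:1410.3901 — 5 statements merged into one kernel-verified Lean document; each statement's English description precedes it below -/
import Mathlib

section
/- Let V be a finite-dimensional complex vector space with V = V₁ ⊕ V₂, and let X, Y ∈ End(V) with Y ≠ 0, Y(V₁) ⊆ V₁, Y|_{V₂} = 0, and [Y, X] = 0. Define X₁ : V₁ → V₁ by X₁ = π_{V₁} ∘ X|_{V₁}, where π_{V₁} is the projection onto V₁ along V₂. Then X₁ and X have a common eigenvalue, i.e., σ(X₁) ∩ σ(X) ≠ ∅. -/
/-- **Proposition 4.12.**  Let `V = V₁ ⊕ V₂` be a finite-dimensional complex vector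
space, and `X, Y ∈ End(V)` with `Y ≠ 0`, `Y(V₁) ⊆ V₁`, `Y|_{V₂} = 0` and `[Y,X] = 0`.
Let `X₁ : V₁ → V₁` be `π_{V₁} ∘ X|_{V₁}` where `π_{V₁}` is the projection onto `V₁`
along `V₂`.  Then `σ(X₁) ∩ σ(X) ≠ ∅`. -/
theorem stmt1 (V : Type*) [AddCommGroup V] [Module ℂ V] [FiniteDimensional ℂ V]
    (V₁ V₂ : Submodule ℂ V) (hcompl : IsCompl V₁ V₂)
    (X Y : Module.End ℂ V) (hY0 : Y ≠ 0)
    (hY1 : ∀ v ∈ V₁, Y v ∈ V₁) (hY2 : ∀ v ∈ V₂, Y v = 0)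
    (hcomm : Y * X = X * Y)
    (X₁ : Module.End ℂ V₁)
    (hX₁ : ∀ v : V₁, X₁ v = Submodule.linearProjOfIsCompl V₁ V₂ hcompl (X v)) :
    ∃ μ : ℂ, Module.End.HasEigenvalue X₁ μ ∧ Module.End.HasEigenvalue X μ := by
  set W : Submodule ℂ V := LinearMap.range Y with hW
  -- W ⊆ V₁
  have hWV₁ : ∀ w ∈ W, w ∈ V₁ := by
    rintro _ ⟨v, rfl⟩
    obtain ⟨v₁, v₂, hv₁, hv₂, rfl⟩ := Submodule.codisjoint_iff_exists_add_eq.mp hcompl.codisjoint v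
    rw [map_add, hY2 _ hv₂, add_zero]
    exact hY1 _ hv₁
  -- W is X-invariant
  have hXW : ∀ w ∈ W, X w ∈ W := by
    rintro _ ⟨v, rfl⟩
    refine ⟨X v, ?_⟩
    simpa [Module.End.mul_apply] using congrArg (fun f => f v) hcomm
  have hnt : Nontrivial W := by
    rcases (not_forall.mp (fun h => hY0 (LinearMap.ext fun v => by simpa using h v))) with ⟨v, hv⟩
    exact Submodule.nontrivial_iff_ne_bot.mpr (fun hb => hv (by
      have : Y v ∈ W := ⟨v, rfl⟩
      simpa [hb] using this))
  let f : Module.End ℂ W := X.restrict hXW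
  obtain ⟨μ, hμ⟩ := Module.End.exists_eigenvalue f
  obtain ⟨w, hwmem, hwne⟩ := hμ.exists_hasEigenvector
  have hw : X (w : V) = μ • (w : V) := by
    have : f w = μ • w := Module.End.mem_eigenspace_iff.mp hwmem
    have := congrArg (Subtype.val) this
    simpa [f, LinearMap.restrict_apply] using this
  have hwne' : (w : V) ≠ 0 := fun h => hwne (Subtype.ext h)
  refine ⟨μ, ?_, ?_⟩
  · have hwV₁ : (w : V) ∈ V₁ := hWV₁ _ w.2
    refine Module.End.hasEigenvalue_of_hasEigenvector (x := ⟨(w : V), hwV₁⟩) ⟨?_, ?_⟩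
    · rw [Module.End.mem_eigenspace_iff, hX₁]
      apply Subtype.ext
      simp only [Submodule.coe_smul]
      rw [show (X (⟨(w : V), hwV₁⟩ : V₁) : V) = μ • (w : V) from hw]
      rw [map_smul]
      have hproj : (V₁.linearProjOfIsCompl V₂ hcompl) (w : V) = ⟨(w : V), hwV₁⟩ :=
        Submodule.linearProjOfIsCompl_apply_left hcompl ⟨(w : V), hwV₁⟩
      rw [hproj]
      rfl
    · exact fun h => hwne' (by simpa using congrArg Subtype.val h)
  · exact Module.End.hasEigenvalue_of_hasEigenvector
      ⟨Module.End.mem_eigenspace_iff.mpr hw, hwne'⟩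
end

section
/- Let x be an n×n complex matrix and let x_{n-1} denote its upper-left (n-1)×(n-1) submatrix. If there exists a nonzero (n-1)×(n-1) complex matrix Y such that the n×n matrix obtained by embedding Y into the upper-left corner (with zeros elsewhere) commutes with x, then x_{n-1} and x share a common eigenvalue. -/
/-- The embedding of `gl(n,ℂ)` into `gl(n+1,ℂ)` as the upper-left corner
(last row and column zero). -/
def cornerEmbed (n : ℕ) (Y : Matrix (Fin n) (Fin n) ℂ) :
    Matrix (Fin (n + 1)) (Fin (n + 1)) ℂ := fun i j =>
  if h : (i : ℕ) < n ∧ (j : ℕ) < n then Y ⟨i, h.1⟩ ⟨j, h.2⟩ else 0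

lemma cornerEmbed_castSucc {n : ℕ} (Y : Matrix (Fin n) (Fin n) ℂ) (i j : Fin n) :
    cornerEmbed n Y i.castSucc j.castSucc = Y i j := by
  unfold cornerEmbed
  rw [dif_pos ⟨i.isLt, j.isLt⟩]
  rfl

lemma cornerEmbed_last_right {n : ℕ} (Y : Matrix (Fin n) (Fin n) ℂ) (i : Fin (n + 1)) :
    cornerEmbed n Y i (Fin.last n) = 0 := by
  unfold cornerEmbed
  rw [dif_neg]
  simp

lemma cornerEmbed_last_left {n : ℕ} (Y : Matrix (Fin n) (Fin n) ℂ) (j : Fin (n + 1)) :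
    cornerEmbed n Y (Fin.last n) j = 0 := by
  unfold cornerEmbed
  rw [dif_neg]
  simp

/-- Eigenvalues of a matrix give membership in its spectrum. -/
lemma matrix_mem_spectrum {m : ℕ} (A : Matrix (Fin m) (Fin m) ℂ) (μ : ℂ)
    (v : Fin m → ℂ) (hv : v ≠ 0) (h : A.mulVec v = μ • v) :
    μ ∈ spectrum ℂ A := by
  have hf : Module.End.HasEigenvalue (Matrix.toLinAlgEquiv' A) μ := by
    apply Module.End.hasEigenvalue_of_hasEigenvector (x := v)
    refine ⟨?_, hv⟩
    rw [Module.End.mem_eigenspace_iff]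
    show Matrix.toLinAlgEquiv' A v = μ • v
    rw [Matrix.toLinAlgEquiv'_apply, h]
  have := Module.End.hasEigenvalue_iff_mem_spectrum.mp hf
  rwa [AlgEquiv.spectrum_eq Matrix.toLinAlgEquiv' A] at this

/-- **Example 4.14.** Let `x ∈ gl(n+1,ℂ)` and let `x_{n}` denote its upper-left
`n × n` submatrix.  If there exists a nonzero `Y ∈ gl(n,ℂ)` whose embedding into the
upper-left corner of `gl(n+1,ℂ)` commutes with `x`, then `x_{n}` and `x` share a
common eigenvalue. -/
theorem stmt2 (n : ℕ) (x : Matrix (Fin (n + 1)) (Fin (n + 1)) ℂ)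
    (Y : Matrix (Fin n) (Fin n) ℂ) (hY : Y ≠ 0)
    (hcomm : cornerEmbed n Y * x = x * cornerEmbed n Y) :
    ∃ a : ℂ, a ∈ spectrum ℂ x ∧
      a ∈ spectrum ℂ (x.submatrix (Fin.castSucc : Fin n → Fin (n + 1)) Fin.castSucc) := by
  set A : Matrix (Fin n) (Fin n) ℂ :=
    x.submatrix (Fin.castSucc : Fin n → Fin (n + 1)) Fin.castSucc with hA
  -- Block commutation relations
  have hYA : Y * A = A * Y := by
    ext i j
    have h := congrFun (congrFun hcomm i.castSucc) j.castSucc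
    simp only [Matrix.mul_apply] at h ⊢
    rw [Fin.sum_univ_castSucc, Fin.sum_univ_castSucc] at h
    simp only [cornerEmbed_castSucc, cornerEmbed_last_left, cornerEmbed_last_right,
      zero_mul, mul_zero, add_zero] at h
    simpa [hA, Matrix.submatrix_apply] using h
  have hcY : ∀ j : Fin n, ∑ k : Fin n, x (Fin.last n) k.castSucc * Y k j = 0 := by
    intro j
    have h := congrFun (congrFun hcomm (Fin.last n)) j.castSucc
    rw [Matrix.mul_apply, Matrix.mul_apply, Fin.sum_univ_castSucc, Fin.sum_univ_castSucc] at h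
    simp only [cornerEmbed_castSucc, cornerEmbed_last_left, cornerEmbed_last_right,
      zero_mul, mul_zero, add_zero, Finset.sum_const_zero, zero_add] at h
    exact h.symm
  -- The range of `Y` is a nonzero `A`-invariant subspace
  set f : Module.End ℂ (Fin n → ℂ) := Matrix.mulVecLin A with hf
  set W : Submodule ℂ (Fin n → ℂ) := LinearMap.range (Matrix.mulVecLin Y) with hW
  have hinv : ∀ v ∈ W, f v ∈ W := by
    rintro _ ⟨u, rfl⟩
    exact ⟨A.mulVec u, by
      simp only [hf, Matrix.mulVecLin_apply, ← Matrix.mulVec_mulVec, ← hYA,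
        Matrix.mulVec_mulVec]⟩
  have hWnt : Nontrivial W := by
    obtain ⟨i, j, hij⟩ : ∃ i j, Y i j ≠ 0 := by
      by_contra h
      push_neg at h
      exact hY (by ext i j; simp [h])
    have : Y.mulVec (Pi.single j 1) ≠ 0 := by
      intro h0
      apply hij
      have := congrFun h0 i
      simpa [Matrix.mulVec_single] using this
    exact nontrivial_of_ne ⟨Y.mulVec (Pi.single j 1), ⟨_, rfl⟩⟩ 0
      (by simpa [Submodule.mk_eq_zero] using this)
  -- take an eigenvector of `A` restricted to `W`
  obtain ⟨μ, hμ⟩ := Module.End.exists_eigenvalue (f.restrict hinv)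
  obtain ⟨w, hw⟩ := hμ.exists_hasEigenvector
  have hweq : f (w : Fin n → ℂ) = μ • (w : Fin n → ℂ) := by
    have := congrArg (Subtype.val) hw.apply_eq_smul
    simpa [LinearMap.restrict_apply] using this
  have hwne : (w : Fin n → ℂ) ≠ 0 := by
    intro h0
    exact hw.2 (Subtype.ext h0)
  have hAspec : μ ∈ spectrum ℂ A :=
    matrix_mem_spectrum A μ w hwne (by simpa [hf] using hweq)
  -- extend the eigenvector by zero and feed it to `x`
  obtain ⟨u, hu⟩ := w.2
  refine ⟨μ, ?_, hAspec⟩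
  apply matrix_mem_spectrum x μ (Fin.snoc (w : Fin n → ℂ) 0)
  · intro h0
    apply hwne
    funext i
    simpa using congrFun h0 i.castSucc
  · funext k
    induction k using Fin.lastCases with
    | last =>
      rw [Matrix.mulVec, dotProduct, Fin.sum_univ_castSucc]
      simp only [Fin.snoc_castSucc, Fin.snoc_last, mul_zero, add_zero,
        Pi.smul_apply, smul_eq_mul]
      rw [← hu]
      simp only [Matrix.mulVecLin_apply, Matrix.mulVec, dotProduct]
      calc ∑ j : Fin n, x (Fin.last n) j.castSucc * ∑ k : Fin n, Y j k * u k
          = ∑ j : Fin n, ∑ k : Fin n, x (Fin.last n) j.castSucc * (Y j k * u k) := by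
            simp [Finset.mul_sum]
        _ = ∑ k : Fin n, ∑ j : Fin n, x (Fin.last n) j.castSucc * (Y j k * u k) :=
            Finset.sum_comm
        _ = ∑ k : Fin n, (∑ j : Fin n, x (Fin.last n) j.castSucc * Y j k) * u k := by
            simp [Finset.sum_mul, mul_assoc]
        _ = 0 := by simp [hcY]
    | cast i =>
      rw [Matrix.mulVec, dotProduct, Fin.sum_univ_castSucc]
      simp only [Fin.snoc_castSucc, Fin.snoc_last, mul_zero, add_zero,
        Pi.smul_apply, smul_eq_mul]
      have := congrFun hweq i
      simpa [hf, hA, Matrix.mulVecLin_apply, Matrix.mulVec, dotProduct,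
        Matrix.submatrix_apply] using this
end

section
/- Let X be the (2l+1)×(2l+1) complex matrix with diagonal entries a₁,…,a_l, 0, -a_l,…,-a₁, with column l+1 having entries u₁,…,u_l above the diagonal zero and -u_l,…,-u₁ below in reversed order, and row l+1 having entries v₁,…,v_l before the diagonal and -v_l,…,-v₁ after (all other entries zero), where the a_j are nonzero and pairwise satisfy a_k ≠ ±a_j for k ≠ j. Then for each j, a_j is an eigenvalue of X if and only if u_j v_j = 0. -/
/-- The matrix `X` of Equation (3.10): size `(2l+1) × (2l+1)`, with diagonal
`a₁, …, a_l, 0, -a_l, …, -a₁`, middle column entries `u₁, …, u_l` above the diagonal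
zero and `-u_l, …, -u₁` below, and middle row entries `v₁, …, v_l` before the
diagonal and `-v_l, …, -v₁` after; all other entries zero.  Explicitly
`X e_j = a_j e_j + v_j e_0`, `X e_{-j} = -a_j e_{-j} - u_j e_0`,
`X e_0 = ∑ u_j e_j - v_j e_{-j}`. -/
def XiMatrix (l : ℕ) (a u v : Fin l → ℂ) :
    Matrix (Fin (2 * l + 1)) (Fin (2 * l + 1)) ℂ := fun i k =>
  if h : (i : ℕ) < l ∧ (i : ℕ) = (k : ℕ) then a ⟨i, h.1⟩
  else if h : (i : ℕ) < l ∧ (k : ℕ) = l then u ⟨i, h.1⟩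
  else if h : (i : ℕ) = l ∧ (k : ℕ) < l then v ⟨k, h.2⟩
  else if h : (i : ℕ) = l ∧ l < (k : ℕ) then
    -u ⟨2 * l - k, by have := k.isLt; omega⟩
  else if h : (k : ℕ) = l ∧ l < (i : ℕ) then
    -v ⟨2 * l - i, by have := i.isLt; omega⟩
  else if h : l < (i : ℕ) ∧ (i : ℕ) = (k : ℕ) then
    -a ⟨2 * l - i, by have := i.isLt; omega⟩
  else 0

lemma xi_row_lt {l : ℕ} (a u v : Fin l → ℂ) (i k : Fin (2*l+1)) (hi : (i:ℕ) < l) :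
    XiMatrix l a u v i k =
      if (k:ℕ) = (i:ℕ) then a ⟨i, hi⟩ else if (k:ℕ) = l then u ⟨i, hi⟩ else 0 := by
  unfold XiMatrix
  split_ifs with h1 h2 h3 h4 h5 h6 <;> first | rfl | omega

lemma xi_row_gt {l : ℕ} (a u v : Fin l → ℂ) (i k : Fin (2*l+1)) (hi : l < (i:ℕ)) :
    XiMatrix l a u v i k =
      if (k:ℕ) = l then -v ⟨2*l - i, by have := i.isLt; omega⟩
      else if (k:ℕ) = (i:ℕ) then -a ⟨2*l - i, by have := i.isLt; omega⟩ else 0 := by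
  unfold XiMatrix
  split_ifs with h1 h2 h3 h4 h5 h6 <;> first | rfl | omega

lemma xi_row_mid {l : ℕ} (a u v : Fin l → ℂ) (i k : Fin (2*l+1)) (hi : (i:ℕ) = l) :
    XiMatrix l a u v i k =
      if h : (k:ℕ) < l then v ⟨k, h⟩
      else if h : l < (k:ℕ) then -u ⟨2*l - k, by have := k.isLt; omega⟩ else 0 := by
  unfold XiMatrix
  split_ifs with h1 h2 h3 h4 h5 h6 <;> first | rfl | omega


/-- **Equation (3.12).**  With the `a_j` nonzero and satisfying `a_k ≠ ± a_j` for
`k ≠ j`, the scalar `a_j` is an eigenvalue of the matrix `X` above if and only if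
`u_j v_j = 0`. -/
theorem stmt8 (l : ℕ) (a u v : Fin l → ℂ)
    (ha0 : ∀ j, a j ≠ 0)
    (hdist : ∀ j k, j ≠ k → a j ≠ a k ∧ a j ≠ -a k)
    (j : Fin l) :
    a j ∈ spectrum ℂ (XiMatrix l a u v) ↔ u j * v j = 0 := by
  classical
  have hjl : (j : ℕ) < l := j.isLt
  set j' : Fin (2*l+1) := ⟨j, by omega⟩ with hj'
  set mid : Fin (2*l+1) := ⟨l, by omega⟩ with hmid
  have hjm : j' ≠ mid := by
    intro h
    have := congrArg (Fin.val) h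
    simp [hj', hmid] at this; omega
  have hdet : a j ∈ spectrum ℂ (XiMatrix l a u v) ↔
      (algebraMap ℂ (Matrix (Fin (2*l+1)) (Fin (2*l+1)) ℂ) (a j) - XiMatrix l a u v).det = 0 := by
    rw [spectrum.mem_iff, Matrix.isUnit_iff_isUnit_det, isUnit_iff_ne_zero, not_ne_iff]
  rw [hdet]
  constructor
  · intro hd
    obtain ⟨w, hw0, hw⟩ := Matrix.exists_mulVec_eq_zero_iff.2 hd
    have heig : ∀ i, (XiMatrix l a u v).mulVec w i = a j * w i := by
      intro i
      have h1 := congrFun hw i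
      rw [Matrix.sub_mulVec, Algebra.algebraMap_eq_smul_one, Matrix.smul_mulVec,
        Matrix.one_mulVec] at h1
      have h2 : a j * w i - (XiMatrix l a u v).mulVec w i = 0 := by
        simpa [Pi.sub_apply, smul_eq_mul] using h1
      exact (sub_eq_zero.mp h2).symm
    by_cases hwm : w mid = 0
    · -- w is supported at j'
      have hsupp : ∀ i, i ≠ j' → w i = 0 := by
        intro i hij
        rcases lt_trichotomy (i:ℕ) l with hi | hi | hi
        · have heq := heig i
          have hrow : (XiMatrix l a u v).mulVec w i = a ⟨i, hi⟩ * w i := by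
            rw [Matrix.mulVec, dotProduct]
            rw [Finset.sum_eq_single i]
            · rw [xi_row_lt a u v i i hi, if_pos rfl]
            · intro k _ hk
              rw [xi_row_lt a u v i k hi]
              by_cases hki : (k:ℕ) = (i:ℕ)
              · exact absurd (Fin.ext hki) hk
              · rw [if_neg hki]
                by_cases hkl : (k:ℕ) = l
                · have : k = mid := Fin.ext hkl
                  rw [if_pos hkl, this, hwm, mul_zero]
                · rw [if_neg hkl, zero_mul]
            · intro h; exact absurd (Finset.mem_univ i) h
          rw [hrow] at heq
          have hne : a ⟨i, hi⟩ ≠ a j := by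
            have hji : j ≠ ⟨i, hi⟩ := by
              intro h
              apply hij
              apply Fin.ext
              exact (congrArg Fin.val h).symm
            exact fun h => (hdist j ⟨i, hi⟩ hji).1 h.symm
          have := sub_eq_zero.2 heq
          rw [← sub_mul] at this
          rcases mul_eq_zero.1 this with h | h
          · exact absurd (sub_eq_zero.1 h) hne
          · exact h
        · have : i = mid := Fin.ext hi
          rw [this]; exact hwm
        · have heq := heig i
          have hil : 2*l - (i:ℕ) < l := by have := i.isLt; omega
          have hrow : (XiMatrix l a u v).mulVec w i = -a ⟨2*l - i, hil⟩ * w i := by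
            rw [Matrix.mulVec, dotProduct]
            rw [Finset.sum_eq_single i]
            · rw [xi_row_gt a u v i i hi, if_neg (by omega), if_pos rfl]
            · intro k _ hk
              rw [xi_row_gt a u v i k hi]
              by_cases hkl : (k:ℕ) = l
              · have : k = mid := Fin.ext hkl
                rw [if_pos hkl, this, hwm, mul_zero]
              · rw [if_neg hkl]
                by_cases hki : (k:ℕ) = (i:ℕ)
                · exact absurd (Fin.ext hki) hk
                · rw [if_neg hki, zero_mul]
            · intro h; exact absurd (Finset.mem_univ i) h
          rw [hrow] at heq
          set m : Fin l := ⟨2*l - i, hil⟩ with hm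
          have hne : a j ≠ -a m := by
            by_cases hjm2 : j = m
            · rw [← hjm2]
              intro h
              have hh : (2 : ℂ) * a j = 0 := by linear_combination h
              rcases mul_eq_zero.1 hh with h2 | h2
              · norm_num at h2
              · exact ha0 j h2
            · exact (hdist j m hjm2).2
          have := sub_eq_zero.2 heq.symm
          have h2 : (a j - -a m) * w i = 0 := by rw [sub_mul]; linear_combination this
          rcases mul_eq_zero.1 h2 with h | h
          · exact absurd (sub_eq_zero.1 h) hne
          · exact h
      have hwj : w j' ≠ 0 := by
        intro h
        apply hw0
        funext i
        by_cases hij : i = j'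
        · rw [hij, h]; rfl
        · exact hsupp i hij
      -- row mid
      have heq := heig mid
      have hrow : (XiMatrix l a u v).mulVec w mid = v j * w j' := by
        rw [Matrix.mulVec, dotProduct]
        rw [Finset.sum_eq_single j']
        · rw [xi_row_mid a u v mid j' rfl]
          rw [dif_pos (show ((j':Fin (2*l+1)):ℕ) < l from hjl)]
        · intro k _ hk
          rw [hsupp k hk, mul_zero]
        · intro h; exact absurd (Finset.mem_univ j') h
      rw [hrow, hwm, mul_zero] at heq
      rcases mul_eq_zero.1 heq with h | h
      · rw [h, mul_zero]
      · exact absurd h hwj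
    · -- w mid ≠ 0 : use row j'
      have heq := heig j'
      have hrow : (XiMatrix l a u v).mulVec w j' = a j * w j' + u j * w mid := by
        rw [Matrix.mulVec, dotProduct]
        have hz : ∀ k ∈ Finset.univ, k ∉ ({j', mid} : Finset (Fin (2*l+1))) →
            XiMatrix l a u v j' k * w k = 0 := by
          intro k _ hk
          simp only [Finset.mem_insert, Finset.mem_singleton, not_or] at hk
          rw [xi_row_lt a u v j' k hjl]
          rw [if_neg (fun h => hk.1 (Fin.ext h)), if_neg (fun h => hk.2 (Fin.ext h)), zero_mul]
        rw [← Finset.sum_subset (Finset.subset_univ _) hz, Finset.sum_pair hjm]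
        rw [xi_row_lt a u v j' j' hjl, xi_row_lt a u v j' mid hjl]
        rw [if_pos rfl, if_neg (show (mid:ℕ) ≠ (j':ℕ) by simp [hmid, hj']; omega),
          if_pos rfl]
      rw [hrow] at heq
      have : u j * w mid = 0 := by linear_combination heq
      rcases mul_eq_zero.1 this with h | h
      · rw [h, zero_mul]
      · exact absurd h hwm
  · intro huv
    rcases mul_eq_zero.1 huv with hu | hv
    · apply Matrix.det_eq_zero_of_row_eq_zero j'
      intro k
      rw [Matrix.sub_apply, Matrix.algebraMap_matrix_apply, xi_row_lt a u v j' k hjl]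
      by_cases h1 : (k:ℕ) = (j':ℕ)
      · rw [if_pos h1, if_pos (Fin.ext h1.symm)]
        simp [hj']
      · rw [if_neg h1, if_neg (fun h => h1 (congrArg Fin.val h).symm)]
        by_cases h2 : (k:ℕ) = l
        · rw [if_pos h2]
          have : u ⟨(j':ℕ), hjl⟩ = u j := by congr 1
          rw [this, hu, sub_zero]
        · rw [if_neg h2, sub_zero]
    · apply Matrix.det_eq_zero_of_column_eq_zero j'
      intro i
      rw [Matrix.sub_apply, Matrix.algebraMap_matrix_apply]
      rcases lt_trichotomy (i:ℕ) l with hi | hi | hi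
      · rw [xi_row_lt a u v i j' hi]
        by_cases h1 : ((j':Fin (2*l+1)):ℕ) = (i:ℕ)
        · rw [if_pos h1, if_pos (Fin.ext h1.symm)]
          have : a ⟨(i:ℕ), hi⟩ = a j := by
            congr 1
            apply Fin.ext
            simpa [hj'] using h1.symm
          rw [this]; simp
        · rw [if_neg h1, if_neg (fun h => h1 (congrArg Fin.val h).symm),
            if_neg (show ((j':Fin (2*l+1)):ℕ) ≠ l by simp [hj']; omega), sub_zero]
      · rw [xi_row_mid a u v i j' hi]
        rw [dif_pos (show ((j':Fin (2*l+1)):ℕ) < l from hjl)]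
        have : v ⟨(j':ℕ), hjl⟩ = v j := by congr 1
        rw [this, hv, if_neg (show i ≠ j' by intro h; rw [h] at hi; simp [hj'] at hi; omega),
          sub_zero]
      · rw [xi_row_gt a u v i j' hi]
        rw [if_neg (show ((j':Fin (2*l+1)):ℕ) ≠ l by simp [hj']; omega),
          if_neg (show ((j':Fin (2*l+1)):ℕ) ≠ (i:ℕ) by simp [hj']; omega),
          if_neg (show i ≠ j' by intro h; rw [h] at hi; simp [hj'] at hi; omega), sub_zero]
end

section
/- Let g be a complex semisimple Lie algebra with homogeneous generators f₁,…,f_r of ℂ[g]^G of positive degree. If x ∈ g satisfies f_i(x) = 0 for all i = 1,…,r, then x is nilpotent. -/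
open MvPolynomial

/-- Evaluation of a polynomial function on a Lie algebra `L` at a point, in the
coordinates of a basis `b`. -/
noncomputable def polyEvalAt {L : Type*} [AddCommGroup L] [Module ℂ L] {n : ℕ}
    (b : Module.Basis (Fin n) ℂ L) (f : MvPolynomial (Fin n) ℂ) (x : L) : ℂ :=
  MvPolynomial.eval (fun j => b.repr x j) f

/-- Directional derivative `df(x)(y) = ∑_j (∂f/∂x_j)(x) · y_j` of a polynomial
function on `L` in the coordinates of a basis `b`. -/
noncomputable def polyDiff {L : Type*} [AddCommGroup L] [Module ℂ L] {n : ℕ}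
    (b : Module.Basis (Fin n) ℂ L) (f : MvPolynomial (Fin n) ℂ) (x y : L) : ℂ :=
  ∑ j : Fin n,
    MvPolynomial.eval (fun k => b.repr x k) (MvPolynomial.pderiv j f) * b.repr y j

open Module


lemma trace_pow_eq_of_nilpotent_sub {V : Type*} [AddCommGroup V] [Module ℂ V]
    [FiniteDimensional ℂ V] (ψ : Module.End ℂ V) (μ : ℂ)
    (h : IsNilpotent (ψ - algebraMap ℂ (Module.End ℂ V) μ)) (m : ℕ) :
    LinearMap.trace ℂ V (ψ ^ m) = μ ^ m * (finrank ℂ V : ℂ) := by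
  set c := algebraMap ℂ (Module.End ℂ V) μ with hc_def
  have hc : Commute ψ c := (Algebra.commutes μ ψ).symm
  have hcomm : Commute (∑ i ∈ Finset.range m, ψ ^ i * c ^ (m - 1 - i)) (ψ - c) := by
    refine Commute.sum_left _ _ _ fun i _ => ?_
    exact Commute.mul_left (((Commute.refl ψ).sub_right hc).pow_left i)
      ((hc.symm.sub_right (Commute.refl c)).pow_left _)
  have key : IsNilpotent (ψ ^ m - c ^ m) := by
    rw [← hc.geom_sum₂_mul m]
    exact hcomm.isNilpotent_mul_left h
  have h0 : LinearMap.trace ℂ V (ψ ^ m - c ^ m) = 0 :=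
    (LinearMap.isNilpotent_trace_of_isNilpotent key).eq_zero
  rw [map_sub, sub_eq_zero] at h0
  rw [h0, hc_def, ← map_pow, Algebra.algebraMap_eq_smul_one, map_smul, LinearMap.trace_one,
    smul_eq_mul]

lemma isNilpotent_of_trace_pow {V : Type*} [AddCommGroup V] [Module ℂ V]
    [FiniteDimensional ℂ V] (φ : Module.End ℂ V)
    (h : ∀ k : ℕ, LinearMap.trace ℂ V (φ ^ (k + 1)) = 0) : IsNilpotent φ := by
  classical
  have hInd := φ.independent_maxGenEigenspace
  have hT := Module.End.iSup_maxGenEigenspace_eq_top φ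
  have hds := DirectSum.isInternal_submodule_of_iSupIndep_of_iSup_eq_top hInd hT
  have hfin : {μ : ℂ | φ.maxGenEigenspace μ ≠ ⊥}.Finite :=
    WellFoundedGT.finite_ne_bot_of_iSupIndep hInd
  have hmaps0 : ∀ μ : ℂ, Set.MapsTo φ (φ.maxGenEigenspace μ) (φ.maxGenEigenspace μ) :=
    fun μ => φ.mapsTo_maxGenEigenspace_of_comm rfl μ
  have hmaps : ∀ (k : ℕ) (μ : ℂ),
      Set.MapsTo (φ ^ (k + 1)) (φ.maxGenEigenspace μ) (φ.maxGenEigenspace μ) :=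
    fun k μ => φ.mapsTo_maxGenEigenspace_of_comm ((Commute.refl φ).pow_right (k+1)) μ
  -- the trace identity
  have htr : ∀ k : ℕ,
      ∑ μ ∈ hfin.toFinset, μ ^ (k + 1) * (finrank ℂ (φ.maxGenEigenspace μ) : ℂ) = 0 := by
    intro k
    have h1 := LinearMap.trace_eq_sum_trace_restrict' hds hfin (hmaps k)
    have h2 : ∑ μ ∈ hfin.toFinset, μ ^ (k + 1) * (finrank ℂ (φ.maxGenEigenspace μ) : ℂ)
        = ∑ μ ∈ hfin.toFinset,
          LinearMap.trace ℂ _ ((φ ^ (k + 1)).restrict (hmaps k μ)) := by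
      refine Finset.sum_congr rfl fun μ _ => Eq.symm ?_
      have hrw : (φ ^ (k + 1)).restrict (hmaps k μ) = (φ.restrict (hmaps0 μ)) ^ (k + 1) := by
        exact (Module.End.pow_restrict (k + 1) (hmaps0 μ) (hmaps k μ)).symm
      rw [hrw]
      refine trace_pow_eq_of_nilpotent_sub _ μ ?_ (k + 1)
      have hnil := φ.isNilpotent_restrict_maxGenEigenspace_sub_algebraMap μ
      convert hnil using 1
      ext v; rfl
    rw [h2, ← h1, h k]
  -- all eigenvalues vanish
  have key : ∀ μ ∈ hfin.toFinset, μ = 0 := by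
    intro μ0 hμ0
    by_contra hne
    set t := hfin.toFinset.filter (fun μ => μ ≠ 0) with ht_def
    have e := t.equivFin
    set w : Fin t.card → ℂ := fun i => ((e.symm i : t) : ℂ) with hw_def
    have hw : Function.Injective w := by
      intro i j hij
      exact e.symm.injective (Subtype.ext hij)
    set v : Fin t.card → ℂ :=
      fun i => (finrank ℂ (φ.maxGenEigenspace (w i)) : ℂ) * w i with hv_def
    have hv : ∀ i : Fin t.card, ∑ j, v j * w j ^ (i : ℕ) = 0 := by
      intro i
      have e1 : ∑ j, v j * w j ^ (i : ℕ)
          = ∑ j, (w j) ^ ((i : ℕ) + 1) * (finrank ℂ (φ.maxGenEigenspace (w j)) : ℂ) := by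
        refine Finset.sum_congr rfl fun j _ => ?_
        simp only [hv_def]; ring
      have e2 : ∑ j, (w j) ^ ((i : ℕ) + 1) * (finrank ℂ (φ.maxGenEigenspace (w j)) : ℂ)
          = ∑ μ ∈ t, μ ^ ((i : ℕ) + 1) * (finrank ℂ (φ.maxGenEigenspace μ) : ℂ) := by
        rw [← Finset.sum_coe_sort t (fun μ => μ ^ ((i : ℕ) + 1) *
          (finrank ℂ (φ.maxGenEigenspace μ) : ℂ))]
        exact Fintype.sum_equiv e.symm _ _ fun j => rfl
      have e3 : ∑ μ ∈ t, μ ^ ((i : ℕ) + 1) * (finrank ℂ (φ.maxGenEigenspace μ) : ℂ)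
          = ∑ μ ∈ hfin.toFinset, μ ^ ((i : ℕ) + 1) * (finrank ℂ (φ.maxGenEigenspace μ) : ℂ) := by
        refine Finset.sum_filter_of_ne fun μ _ hne0 => ?_
        intro h0
        apply hne0
        rw [h0, zero_pow (Nat.succ_ne_zero _), zero_mul]
      rw [e1, e2, e3, htr i]
    have hvz := Matrix.eq_zero_of_forall_pow_sum_mul_pow_eq_zero hw hv
    have hμ0t : μ0 ∈ t := Finset.mem_filter.mpr ⟨hμ0, hne⟩
    have h5 : v (e ⟨μ0, hμ0t⟩) = 0 := by rw [hvz]; rfl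
    have h6 : w (e ⟨μ0, hμ0t⟩) = μ0 := by
      simp [hw_def]
    simp only [hv_def] at h5
    rw [h6] at h5
    rw [mul_eq_zero] at h5
    rcases h5 with h5 | h5
    · have : φ.maxGenEigenspace μ0 ≠ ⊥ := by simpa using hμ0
      have : Nontrivial (φ.maxGenEigenspace μ0) := Submodule.nontrivial_iff_ne_bot.mpr this
      have hpos : 0 < finrank ℂ (φ.maxGenEigenspace μ0) := finrank_pos
      exact absurd h5 (by exact_mod_cast hpos.ne')
    · exact hne h5
  -- conclude
  have hle : (⨆ μ, φ.maxGenEigenspace μ) ≤ φ.maxGenEigenspace 0 := by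
    refine iSup_le fun μ => ?_
    by_cases hμ : φ.maxGenEigenspace μ = ⊥
    · simp [hμ]
    · have := key μ (by simpa using hμ)
      rw [this]
  refine ((LinearMap.charpoly_nilpotent_tfae φ).out 0 2).mpr fun m => ?_
  have hm : m ∈ φ.maxGenEigenspace 0 := hle (hT ▸ Submodule.mem_top)
  rw [Module.End.mem_maxGenEigenspace] at hm
  obtain ⟨k, hk⟩ := hm
  exact ⟨k, by simpa using hk⟩


section MatrixCalc

variable {n : ℕ}

lemma map_pderiv_mul (j : Fin n) (P Q : Matrix (Fin n) (Fin n) (MvPolynomial (Fin n) ℂ)) :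
    (P * Q).map (pderiv j) = P.map (pderiv j) * Q + P * Q.map (pderiv j) := by
  refine Matrix.ext fun i k => ?_
  simp only [Matrix.map_apply, Matrix.add_apply, Matrix.mul_apply]
  rw [map_sum]
  rw [← Finset.sum_add_distrib]
  exact Finset.sum_congr rfl fun l _ => pderiv_mul

lemma trace_map_pderiv_pow (j : Fin n) (M : Matrix (Fin n) (Fin n) (MvPolynomial (Fin n) ℂ))
    (k : ℕ) : ∀ m : ℕ, (M ^ m * (M ^ (k + 1)).map (pderiv j)).trace
      = (k + 1) • (M ^ (m + k) * M.map (pderiv j)).trace := by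
  induction k with
  | zero => intro m; simp [pow_one]
  | succ k ih =>
    intro m
    have hsplit : (M ^ (k + 1 + 1)).map (pderiv j)
        = M.map (pderiv j) * M ^ (k + 1) + M * (M ^ (k + 1)).map (pderiv j) := by
      rw [pow_succ' M (k + 1), map_pderiv_mul]
    rw [hsplit, Matrix.mul_add, Matrix.trace_add]
    have h1 : (M ^ m * (M.map (pderiv j) * M ^ (k + 1))).trace
        = (M ^ (m + (k + 1)) * M.map (pderiv j)).trace := by
      rw [← Matrix.mul_assoc, Matrix.trace_mul_comm, ← Matrix.mul_assoc, ← pow_add, add_comm (k+1) m]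
    have h2 : M ^ m * (M * (M ^ (k + 1)).map (pderiv j))
        = M ^ (m + 1) * (M ^ (k + 1)).map (pderiv j) := by
      rw [← Matrix.mul_assoc, ← pow_succ]
    rw [h1, h2, ih (m + 1)]
    have : m + 1 + k = m + (k + 1) := by ring
    rw [this, succ_nsmul]
    ring

lemma pderiv_trace (j : Fin n) (N : Matrix (Fin n) (Fin n) (MvPolynomial (Fin n) ℂ)) :
    pderiv j N.trace = (N.map (pderiv j)).trace := by
  simp only [Matrix.trace, Matrix.diag, map_sum, Matrix.map_apply]

lemma eval_trace (c : Fin n → ℂ) (N : Matrix (Fin n) (Fin n) (MvPolynomial (Fin n) ℂ)) :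
    eval c N.trace = (N.map (eval c)).trace := by
  simp only [Matrix.trace, Matrix.diag, map_sum, Matrix.map_apply]

end MatrixCalc

/-- **(Kostant, Proposition 16 of [Kostant63].)**  Let `L` be a complex semisimple
Lie algebra with homogeneous generators `f₁, …, f_r` of the invariant ring
`ℂ[L]^G`, all of positive degree.  If `x ∈ L` satisfies `f_i(x) = 0` for all
`i = 1, …, r`, then `x` is nilpotent. -/
theorem stmt14 (L : Type*) [LieRing L] [LieAlgebra ℂ L] [FiniteDimensional ℂ L]
    [LieAlgebra.IsSemisimple ℂ L]
    (n r : ℕ) (b : Module.Basis (Fin n) ℂ L)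
    (f : Fin r → MvPolynomial (Fin n) ℂ) (d : Fin r → ℕ)
    (hpos : ∀ i, 0 < d i)
    (hhom : ∀ i, (f i).IsHomogeneous (d i))
    (hinvf : ∀ (i : Fin r) (x z : L), polyDiff b (f i) x ⁅z, x⁆ = 0)
    (hgen : ∀ g : MvPolynomial (Fin n) ℂ,
      (∀ x z : L, polyDiff b g x ⁅z, x⁆ = 0) → g ∈ Algebra.adjoin ℂ (Set.range f))
    (x : L) (hx : ∀ i, polyEvalAt b (f i) x = 0) :
    IsNilpotent (LieAlgebra.ad ℂ L x) := by
  classical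
  -- the "generic matrix" of ad
  set T : L →ₗ[ℂ] Matrix (Fin n) (Fin n) ℂ :=
    (LinearMap.toMatrixAlgEquiv b).toLinearMap ∘ₗ (LieAlgebra.ad ℂ L : L →ₗ[ℂ] Module.End ℂ L) with hT_def
  have hT_apply : ∀ y : L, T y = LinearMap.toMatrix b b (LieAlgebra.ad ℂ L y) := fun y => rfl
  set A : Fin n → Matrix (Fin n) (Fin n) ℂ := fun l => T (b l) with hA_def
  set M : Matrix (Fin n) (Fin n) (MvPolynomial (Fin n) ℂ) :=
    ∑ l, (MvPolynomial.X l : MvPolynomial (Fin n) ℂ) • (A l).map (MvPolynomial.C : ℂ → MvPolynomial (Fin n) ℂ) with hM_def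
  -- basic facts
  have hTsum : ∀ y : L, T y = ∑ l, (b.repr y l) • A l := by
    intro y
    conv_lhs => rw [← b.sum_repr y]
    rw [map_sum]
    exact Finset.sum_congr rfl fun l _ => by rw [map_smul]
  have hMapD : ∀ j : Fin n, M.map (pderiv j) = (A j).map MvPolynomial.C := by
    intro j
    ext i k
    simp only [hM_def, Matrix.map_apply, Matrix.sum_apply, Matrix.smul_apply, smul_eq_mul,
      map_sum, pderiv_mul, pderiv_C, mul_zero, add_zero, pderiv_X]
    rw [Finset.sum_eq_single j]
    · simp
    · intro l _ hl
      simp [Pi.single_apply, (Ne.symm hl : ¬ j = l)]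
    · intro h; exact absurd (Finset.mem_univ j) h
  have hMapEval : ∀ c : Fin n → ℂ, M.map (eval c) = ∑ l, c l • A l := by
    intro c
    ext i k
    simp [hM_def, Matrix.map_apply, Matrix.sum_apply, Matrix.smul_apply, smul_eq_mul]
  -- the invariant polynomials g k = trace (M ^ (k+1))
  set g : ℕ → MvPolynomial (Fin n) ℂ := fun k => (M ^ (k + 1)).trace with hg_def
  -- evaluation of g k
  have hEval : ∀ (c : Fin n → ℂ) (k : ℕ),
      eval c (g k) = ((∑ l, c l • A l) ^ (k + 1)).trace := by
    intro c k
    rw [hg_def, eval_trace]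
    congr 1
    have h := map_pow ((eval c).mapMatrix) M (k + 1)
    simp only [RingHom.mapMatrix_apply] at h
    rw [h, hMapEval]
  -- derivative formula: polyDiff of g k
  have hDiff : ∀ (k : ℕ) (y z : L),
      polyDiff b (g k) y z = (k + 1) • ((T y) ^ k * T z).trace := by
    intro k y z
    have hterm : ∀ j : Fin n,
        eval (fun m => b.repr y m) (pderiv j (g k))
          = (k + 1) • ((T y) ^ k * A j).trace := by
      intro j
      rw [hg_def]
      rw [pderiv_trace]
      have h0 : (M ^ (k + 1)).map (pderiv j) = M ^ 0 * (M ^ (k + 1)).map (pderiv j) := by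
        rw [pow_zero, Matrix.one_mul]
      rw [h0]
      have := trace_map_pderiv_pow j M k 0
      rw [this]
      rw [zero_add, hMapD]
      rw [map_nsmul, eval_trace]
      congr 2
      have hp := map_pow ((eval fun m => (b.repr y m : ℂ)).mapMatrix) M k
      simp only [RingHom.mapMatrix_apply] at hp
      have hC : ((A j).map (MvPolynomial.C : ℂ → MvPolynomial (Fin n) ℂ)).map
          (eval fun m => (b.repr y m : ℂ)) = A j := by
        refine Matrix.ext fun i m => ?_
        simp [Matrix.map_apply]
      rw [Matrix.map_mul, hp, hC, hMapEval, ← hTsum]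
    unfold polyDiff
    have : ∀ j : Fin n, eval (fun m => b.repr y m) (pderiv j (g k)) * b.repr z j
        = (k + 1) • (((T y) ^ k * ((b.repr z j) • A j)).trace) := by
      intro j
      rw [hterm j]
      rw [Matrix.mul_smul, Matrix.trace_smul]
      simp only [smul_eq_mul, nsmul_eq_mul]
      ring
    rw [Finset.sum_congr rfl fun j _ => this j]
    rw [← Finset.smul_sum]
    congr 1
    rw [← Matrix.trace_sum]
    congr 1
    rw [← Finset.mul_sum]
    congr 1
    exact (hTsum z).symm
  -- invariance of g k
  have hinv : ∀ (k : ℕ) (y z : L), polyDiff b (g k) y ⁅z, y⁆ = 0 := by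
    intro k y z
    rw [hDiff]
    have hbr : T ⁅z, y⁆ = T z * T y - T y * T z := by
      rw [hT_apply, hT_apply, hT_apply]
      rw [show LieAlgebra.ad ℂ L ⁅z, y⁆ = ⁅LieAlgebra.ad ℂ L z, LieAlgebra.ad ℂ L y⁆ by
        ext w; simp [Ring.lie_def, lie_lie]]
      rw [Ring.lie_def]
      rw [map_sub, LinearMap.toMatrix_mul b, LinearMap.toMatrix_mul b]
    rw [hbr, Matrix.mul_sub, Matrix.trace_sub]
    have h1 : ((T y) ^ k * (T z * T y)).trace = ((T y) ^ (k + 1) * T z).trace := by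
      rw [← Matrix.mul_assoc, Matrix.trace_mul_comm, ← Matrix.mul_assoc, ← pow_succ']
    have h2 : ((T y) ^ k * (T y * T z)).trace = ((T y) ^ (k + 1) * T z).trace := by
      rw [← Matrix.mul_assoc, ← pow_succ]
    rw [h1, h2, sub_self, smul_zero]
  -- membership in the adjoin and evaluation at x
  have hmem : ∀ k, g k ∈ Algebra.adjoin ℂ (Set.range f) := fun k => hgen (g k) (hinv k)
  have hagree : ∀ p ∈ Algebra.adjoin ℂ (Set.range f),
      eval (fun j => (b.repr x j : ℂ)) p = eval (fun _ : Fin n => (0 : ℂ)) p := by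
    intro p hp
    induction hp using Algebra.adjoin_induction with
    | mem q hq =>
      obtain ⟨i, rfl⟩ := hq
      have h1 : eval (fun j => (b.repr x j : ℂ)) (f i) = 0 := hx i
      have h2 : eval (fun _ : Fin n => (0 : ℂ)) (f i) = 0 := by
        rw [eval_zero']
        exact (hhom i).coeff_eq_zero (by simpa using (hpos i).ne)
      rw [h1, h2]
    | algebraMap r => simp
    | add q₁ q₂ _ _ h₁ h₂ => simp [h₁, h₂]
    | mul q₁ q₂ _ _ h₁ h₂ => simp [h₁, h₂]
  -- traces of powers of ad x vanish
  have htr : ∀ k : ℕ, LinearMap.trace ℂ L ((LieAlgebra.ad ℂ L x) ^ (k + 1)) = 0 := by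
    intro k
    have e1 : eval (fun j => (b.repr x j : ℂ)) (g k) = ((T x) ^ (k + 1)).trace := by
      rw [hEval, ← hTsum]
    have e2 : eval (fun _ : Fin n => (0 : ℂ)) (g k) = 0 := by
      rw [hEval]
      simp [zero_pow (Nat.succ_ne_zero k)]
    have e3 : ((T x) ^ (k + 1)).trace = 0 := by
      rw [← e1, hagree (g k) (hmem k), e2]
    have hTpow : LinearMap.toMatrix b b ((LieAlgebra.ad ℂ L x) ^ (k + 1)) = (T x) ^ (k + 1) := by
      have hxx : T x = LinearMap.toMatrixAlgEquiv b (LieAlgebra.ad ℂ L x) := rfl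
      rw [hxx, ← map_pow (LinearMap.toMatrixAlgEquiv b) (LieAlgebra.ad ℂ L x) (k + 1)]
      rfl
    rw [LinearMap.trace_eq_matrix_trace ℂ b, hTpow]
    exact e3
  exact isNilpotent_of_trace_pow _ htr
end

section
/- Let x ∈ so(n,ℂ) (skew with respect to the antidiagonal form, n = 2l or 2l+1 with the embedded so(n-1,ℂ) as the θ-fixed subalgebra) and write x = x_k + x_p with x_k ∈ so(n-1,ℂ). If the centralizer of x_k in so(n-1,ℂ) intersects the centralizer of x in so(n,ℂ) nontrivially, then x and x_k share a common eigenvalue (where for n odd x_k is regarded as acting on the (n-1)-dimensional θ-fixed subspace of ℂ^n). -/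
/-- The `n × n` matrix `S_n` with ones down the antidiagonal, defining the symmetric
bilinear form whose skew matrices form `so(n,ℂ)`. -/
def antidiagForm (n : ℕ) : Matrix (Fin n) (Fin n) ℂ := fun i j =>
  if (i : ℕ) + (j : ℕ) + 1 = n then 1 else 0

/-- The matrix `T` implementing the involution `θ` of `so(n,ℂ)` with fixed
subalgebra `so(n-1,ℂ)` (Sections 2.1–2.2):  for `n = 2l+1` odd, `T` is diagonal with
`-1` in the middle entry `e_0` and `1` elsewhere (`θ = Ad(t)`);  for `n = 2l` even,
`T` is the permutation matrix exchanging the two middle basis vectors `e_l, e_{-l}`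
(the diagram automorphism). -/
def thetaMat (n : ℕ) : Matrix (Fin n) (Fin n) ℂ := fun i j =>
  if n % 2 = 1 then
    (if i = j then (if 2 * (i : ℕ) + 1 = n then -1 else 1) else 0)
  else
    (if ((i : ℕ) + 1 = n / 2 ∧ (j : ℕ) = n / 2) ∨
        ((i : ℕ) = n / 2 ∧ (j : ℕ) + 1 = n / 2) then 1
     else if i = j ∧ (i : ℕ) + 1 ≠ n / 2 ∧ (i : ℕ) ≠ n / 2 then 1
     else 0)

/-- The projection `x ↦ x_k` of `so(n,ℂ)` onto the `θ`-fixed subalgebra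
`k = so(n-1,ℂ)`, along the `(-1)`-eigenspace of `θ`:  `x_k = (x + T x T)/2`. -/
noncomputable def kProj (n : ℕ) (x : Matrix (Fin n) (Fin n) ℂ) :
    Matrix (Fin n) (Fin n) ℂ :=
  (2⁻¹ : ℂ) • (x + thetaMat n * x * thetaMat n)

namespace Stmt15Aux

/-- The distinguished vector spanning the `(-1)`-eigenspace of `θ`. -/
noncomputable def uVec (n : ℕ) : Fin n → ℂ := fun i =>
  if n % 2 = 1 then (if 2 * (i : ℕ) + 1 = n then 1 else 0)
  else (if (i : ℕ) + 1 = n / 2 then 1 else if (i : ℕ) = n / 2 then -1 else 0)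

lemma uVec_apply_even {n : ℕ} (he : n % 2 = 0) (i : Fin n) :
    uVec n i = if (i : ℕ) + 1 = n / 2 then 1 else if (i : ℕ) = n / 2 then -1 else 0 := by
  simp only [uVec]
  rw [if_neg (by omega)]

lemma uVec_apply_odd {n : ℕ} (ho : n % 2 = 1) (i : Fin n) :
    uVec n i = if 2 * (i : ℕ) + 1 = n then 1 else 0 := by
  simp only [uVec, ho, if_true]

lemma theta_odd {n : ℕ} (ho : n % 2 = 1) :
    thetaMat n = Matrix.diagonal (fun i : Fin n => if 2 * (i : ℕ) + 1 = n then (-1 : ℂ) else 1) := by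
  funext i j
  simp only [thetaMat, ho, if_pos rfl, Matrix.diagonal_apply]
  by_cases h : i = j
  · simp [h]
  · simp [h]

lemma u_odd {n : ℕ} (ho : n % 2 = 1) :
    uVec n = Pi.single (⟨n / 2, by omega⟩ : Fin n) (1 : ℂ) := by
  funext i
  simp only [uVec, ho, if_pos rfl, Pi.single_apply]
  split_ifs with h1 h2 h2 <;> first | rfl | (exfalso; simp only [Fin.ext_iff] at *; omega)

lemma theta_even {n : ℕ} (he : n % 2 = 0) (hn : n ≠ 0) :
    thetaMat n = fun i j =>
      if j = Equiv.swap (⟨n / 2 - 1, by omega⟩ : Fin n) (⟨n / 2, by omega⟩ : Fin n) i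
      then (1 : ℂ) else 0 := by
  funext i j
  have h01 : ¬ (n % 2 = 1) := by omega
  simp only [thetaMat, if_neg h01, Equiv.swap_apply_def]
  split_ifs <;> first | rfl | (exfalso; simp only [Fin.ext_iff] at *; omega)

lemma u_even {n : ℕ} (he : n % 2 = 0) (hn : n ≠ 0) :
    uVec n = Pi.single (⟨n / 2 - 1, by omega⟩ : Fin n) (1 : ℂ)
      - Pi.single (⟨n / 2, by omega⟩ : Fin n) (1 : ℂ) := by
  funext i
  have h01 : ¬ (n % 2 = 1) := by omega
  simp only [uVec, if_neg h01, Pi.sub_apply, Pi.single_apply, Fin.ext_iff]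
  split_ifs <;> norm_num <;> omega

lemma theta_sq {n : ℕ} (hn : n ≠ 0) : thetaMat n * thetaMat n = 1 := by
  rcases Nat.mod_two_eq_zero_or_one n with he | ho
  · rw [theta_even he hn]
    funext i k
    erw [Matrix.mul_apply]
    simp only [Matrix.mul_apply, ite_mul, one_mul, zero_mul, Finset.sum_ite_eq',
      Finset.mem_univ, if_true, Equiv.swap_apply_self, Matrix.one_apply]
    by_cases h : i = k
    · simp [h]
    · rw [if_neg (fun hh => h hh.symm), if_neg h]
  · rw [theta_odd ho, Matrix.diagonal_mul_diagonal]
    have hd : (fun i : Fin n => (if 2 * (i : ℕ) + 1 = n then (-1 : ℂ) else 1)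
        * (if 2 * (i : ℕ) + 1 = n then (-1 : ℂ) else 1)) = fun _ => (1 : ℂ) := by
      funext i
      split_ifs <;> norm_num
    rw [hd, Matrix.diagonal_one]

lemma theta_mulVec_even {n : ℕ} (he : n % 2 = 0) (hn : n ≠ 0) (w : Fin n → ℂ) :
    (thetaMat n).mulVec w = fun i =>
      w (Equiv.swap (⟨n / 2 - 1, by omega⟩ : Fin n) (⟨n / 2, by omega⟩ : Fin n) i) := by
  rw [theta_even he hn]
  funext i
  simp [Matrix.mulVec, dotProduct, ite_mul, one_mul, zero_mul, Finset.sum_ite_eq']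

lemma theta_mulVec_odd {n : ℕ} (ho : n % 2 = 1) (w : Fin n → ℂ) :
    (thetaMat n).mulVec w = fun i : Fin n =>
      (if 2 * (i : ℕ) + 1 = n then (-1 : ℂ) else 1) * w i := by
  rw [theta_odd ho]
  funext i
  rw [Matrix.mulVec_diagonal]

lemma theta_u {n : ℕ} (hn : n ≠ 0) : (thetaMat n).mulVec (uVec n) = -uVec n := by
  rcases Nat.mod_two_eq_zero_or_one n with he | ho
  · rw [theta_mulVec_even he hn]
    set a : Fin n := ⟨n / 2 - 1, by omega⟩ with ha
    set b : Fin n := ⟨n / 2, by omega⟩ with hb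
    have hav : (a : ℕ) = n / 2 - 1 := rfl
    have hbv : (b : ℕ) = n / 2 := rfl
    funext i
    simp only [Pi.neg_apply]
    by_cases hia : i = a
    · subst hia
      rw [Equiv.swap_apply_left, uVec_apply_even he, uVec_apply_even he,
        if_neg (by rw [hbv]; omega), if_pos hbv, if_pos (by rw [hav]; omega)]
      try norm_num
    · by_cases hib : i = b
      · subst hib
        rw [Equiv.swap_apply_right, uVec_apply_even he, uVec_apply_even he,
          if_pos (by rw [hav]; omega), if_neg (by rw [hbv]; omega), if_pos hbv]
        try norm_num
      · have hia' : ¬ ((i : ℕ) + 1 = n / 2) := fun h => hia (Fin.ext (by rw [hav]; omega))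
        have hib' : ¬ ((i : ℕ) = n / 2) := fun h => hib (Fin.ext (by rw [hbv]; omega))
        rw [Equiv.swap_apply_of_ne_of_ne hia hib, uVec_apply_even he,
          if_neg hia', if_neg hib']
        try norm_num
  · rw [theta_mulVec_odd ho]
    funext i
    simp only [uVec_apply_odd ho, Pi.neg_apply]
    split_ifs <;> norm_num

lemma fix_neg {n : ℕ} (hn : n ≠ 0) (w : Fin n → ℂ)
    (hw : (thetaMat n).mulVec w = -w) : ∃ c : ℂ, w = c • uVec n := by
  have h2 : ∀ z : ℂ, z = -z → z = 0 := by
    intro z hz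
    have hzz : z + z = 0 := by linear_combination hz
    exact add_self_eq_zero.mp hzz
  rcases Nat.mod_two_eq_zero_or_one n with he | ho
  · rw [theta_mulVec_even he hn] at hw
    set a : Fin n := ⟨n / 2 - 1, by omega⟩ with ha
    set b : Fin n := ⟨n / 2, by omega⟩ with hb
    have hav : (a : ℕ) = n / 2 - 1 := rfl
    have hbv : (b : ℕ) = n / 2 := rfl
    refine ⟨w a, funext fun i => ?_⟩
    rw [Pi.smul_apply, uVec_apply_even he, smul_eq_mul]
    by_cases hia : i = a
    · subst hia
      rw [if_pos (by rw [hav]; omega), mul_one]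
    · by_cases hib : i = b
      · subst hib
        rw [if_neg (by rw [hbv]; omega), if_pos hbv]
        have hwa := congrFun hw a
        simp only [Equiv.swap_apply_left, Pi.neg_apply] at hwa
        rw [hwa]; ring
      · have hia' : ¬ ((i : ℕ) + 1 = n / 2) := fun h => hia (Fin.ext (by rw [hav]; omega))
        have hib' : ¬ ((i : ℕ) = n / 2) := fun h => hib (Fin.ext (by rw [hbv]; omega))
        rw [if_neg hia', if_neg hib', mul_zero]
        have hwi := congrFun hw i
        simp only [Equiv.swap_apply_of_ne_of_ne hia hib, Pi.neg_apply] at hwi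
        exact h2 _ hwi
  · rw [theta_mulVec_odd ho] at hw
    refine ⟨w ⟨n / 2, by omega⟩, funext fun i => ?_⟩
    rw [Pi.smul_apply, uVec_apply_odd ho, smul_eq_mul]
    by_cases hi : 2 * (i : ℕ) + 1 = n
    · have hieq : i = (⟨n / 2, by omega⟩ : Fin n) := Fin.ext (by simp only [Fin.val_mk]; omega)
      rw [if_pos hi, ← hieq, mul_one]
    · have hwi := congrFun hw i
      simp only [if_neg hi, Pi.neg_apply, one_mul] at hwi
      rw [if_neg hi, mul_zero]
      exact h2 _ hwi

lemma uSu {n : ℕ} (hn : n ≠ 0) :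
    dotProduct (uVec n) ((antidiagForm n).mulVec (uVec n)) ≠ 0 := by
  rcases Nat.mod_two_eq_zero_or_one n with he | ho
  · rw [u_even he hn]
    simp only [Matrix.mulVec_sub, Matrix.mulVec_single_one, sub_dotProduct,
      single_dotProduct, Matrix.col_apply, Pi.sub_apply, antidiagForm, Fin.val_mk]
    split_ifs <;> first | (exfalso; omega) | norm_num
  · rw [u_odd ho]
    simp only [Matrix.mulVec_single_one, single_dotProduct, Matrix.col_apply, antidiagForm, Fin.val_mk]
    rw [if_pos (by omega)]
    norm_num

end Stmt15Aux

/-- **(Contrapositive of Theorem 4.13.)**  Let `x ∈ so(n,ℂ)` with projection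
`x_k ∈ k = so(n-1,ℂ)`.  If the centralizer of `x_k` in `k` intersects the
centralizer of `x` in `so(n,ℂ)` nontrivially, then `x` and `x_k` share a common
eigenvalue, where `x_k` is regarded as acting on the `(n-1)`-dimensional `θ`-fixed
subspace of `ℂⁿ`. -/
theorem stmt15 (n : ℕ) (x : Matrix (Fin n) (Fin n) ℂ)
    (hx : x.transpose * antidiagForm n + antidiagForm n * x = 0)
    (hcent : ∃ y : Matrix (Fin n) (Fin n) ℂ, y ≠ 0 ∧
      y.transpose * antidiagForm n + antidiagForm n * y = 0 ∧
      thetaMat n * y * thetaMat n = y ∧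
      y * kProj n x = kProj n x * y ∧ y * x = x * y) :
    ∃ μ : ℂ, μ ∈ spectrum ℂ x ∧
      ∃ w : Fin n → ℂ, w ≠ 0 ∧ (thetaMat n).mulVec w = w ∧
        (kProj n x).mulVec w = μ • w := by
  obtain ⟨y, hy0, hyskew, hyT, -, hyx⟩ := hcent
  rcases eq_or_ne n 0 with hn0 | hn
  · subst hn0
    exact absurd (by ext i j; exact i.elim0) hy0
  -- Step 1: `T² = 1` and `T y = y T`.
  have hTT : thetaMat n * thetaMat n = 1 := Stmt15Aux.theta_sq hn
  have h1 : thetaMat n * y = y * thetaMat n := by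
    have h := congrArg (fun M => M * thetaMat n) hyT
    beta_reduce at h
    rw [Matrix.mul_assoc (thetaMat n * y) (thetaMat n) (thetaMat n), hTT, Matrix.mul_one] at h
    exact h
  -- Step 2: `y u = 0` where `u` spans the `(-1)`-eigenspace of `T`.
  have hTu : (thetaMat n).mulVec (Stmt15Aux.uVec n) = -Stmt15Aux.uVec n := Stmt15Aux.theta_u hn
  have hyu_fix : (thetaMat n).mulVec (y.mulVec (Stmt15Aux.uVec n))
      = -(y.mulVec (Stmt15Aux.uVec n)) := by
    rw [Matrix.mulVec_mulVec, h1, ← Matrix.mulVec_mulVec, hTu, Matrix.mulVec_neg]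
  obtain ⟨c, hc⟩ := Stmt15Aux.fix_neg hn _ hyu_fix
  have hs0 := Stmt15Aux.uSu hn
  have hc0 : c = 0 := by
    have h0 := congrArg
      (fun M : Matrix (Fin n) (Fin n) ℂ =>
        dotProduct (Stmt15Aux.uVec n) (M.mulVec (Stmt15Aux.uVec n))) hyskew
    simp only [Matrix.add_mulVec, dotProduct_add, Matrix.zero_mulVec,
      dotProduct_zero] at h0
    rw [← Matrix.mulVec_mulVec, ← Matrix.mulVec_mulVec,
      Matrix.dotProduct_mulVec _ y.transpose _, Matrix.vecMul_transpose, hc,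
      Matrix.mulVec_smul, smul_dotProduct, dotProduct_smul] at h0
    have h8 := add_self_eq_zero.mp h0
    rw [smul_eq_mul] at h8
    exact (mul_eq_zero.mp h8).resolve_right hs0
  have hyu : y.mulVec (Stmt15Aux.uVec n) = 0 := by rw [hc, hc0, zero_smul]
  -- Step 3: `y T = y` and `T y = y`.
  have hyT' : y * thetaMat n = y := by
    have hvec : ∀ w : Fin n → ℂ, y.mulVec ((thetaMat n).mulVec w) = y.mulVec w := by
      intro w
      have hfix : (thetaMat n).mulVec (w - (thetaMat n).mulVec w)
          = -(w - (thetaMat n).mulVec w) := by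
        rw [Matrix.mulVec_sub, Matrix.mulVec_mulVec, hTT, Matrix.one_mulVec, neg_sub]
      obtain ⟨c', hc'⟩ := Stmt15Aux.fix_neg hn _ hfix
      have h3 : y.mulVec (w - (thetaMat n).mulVec w) = 0 := by
        rw [hc', Matrix.mulVec_smul, hyu, smul_zero]
      rw [Matrix.mulVec_sub, sub_eq_zero] at h3
      exact h3.symm
    funext i j
    have h4 := congrFun (hvec (Pi.single j 1)) i
    rw [Matrix.mulVec_mulVec] at h4
    simpa [Matrix.mulVec_single] using h4
  have hTy' : thetaMat n * y = y := by rw [h1, hyT']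
  -- Step 4: `x_k y = x y`.
  have hky : kProj n x * y = x * y := by
    have hTxTy : thetaMat n * x * thetaMat n * y = x * y := by
      calc thetaMat n * x * thetaMat n * y
          = thetaMat n * x * (thetaMat n * y) := Matrix.mul_assoc _ _ _
        _ = thetaMat n * (x * y) := by rw [hTy', Matrix.mul_assoc]
        _ = thetaMat n * (y * x) := by rw [hyx]
        _ = thetaMat n * y * x := (Matrix.mul_assoc _ _ _).symm
        _ = y * x := by rw [hTy']
        _ = x * y := hyx
    rw [kProj, Matrix.smul_mul, Matrix.add_mul, hTxTy, ← two_smul ℂ (x * y), smul_smul]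
    norm_num
  -- Step 5: pick an eigenvector of `x` on the range of `y`.
  set U := LinearMap.range (Matrix.mulVecLin y) with hU
  have hUinv : ∀ ξ ∈ U, x.mulVecLin ξ ∈ U := by
    rintro _ ⟨v, rfl⟩
    refine ⟨x.mulVec v, ?_⟩
    simp only [Matrix.mulVecLin_apply, Matrix.mulVec_mulVec, hyx]
  have hUnt : Nontrivial ↥U := by
    rw [Submodule.nontrivial_iff_ne_bot]
    intro hbot
    apply hy0
    have h4 : Matrix.mulVecLin y = 0 := LinearMap.range_eq_bot.mp hbot
    ext i j
    have h5 : y.mulVec (Pi.single j 1) = 0 := by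
      rw [← Matrix.mulVecLin_apply, h4]; rfl
    have h6 := congrFun h5 i
    simpa [Matrix.mulVec_single] using h6
  obtain ⟨μ, hμ⟩ := Module.End.exists_eigenvalue (x.mulVecLin.restrict hUinv)
  obtain ⟨ξs, hξ⟩ := hμ.exists_hasEigenvector
  obtain ⟨v, hv⟩ := ξs.2
  have hxe : x.mulVec (ξs : Fin n → ℂ) = μ • (ξs : Fin n → ℂ) := by
    have h7 := congrArg Subtype.val hξ.apply_eq_smul
    rw [LinearMap.restrict_coe_apply] at h7
    simpa [Matrix.mulVecLin_apply] using h7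
  have hξ0 : (ξs : Fin n → ℂ) ≠ 0 := by
    intro h
    exact hξ.2 (Subtype.ext h)
  have hvξ : y.mulVec v = (ξs : Fin n → ℂ) := by
    rw [← Matrix.mulVecLin_apply]; exact hv
  refine ⟨μ, ?_, (ξs : Fin n → ℂ), hξ0, ?_, ?_⟩
  · rw [spectrum.mem_iff]
    intro hunit
    obtain ⟨N, hN⟩ := hunit.exists_left_inv
    have h6 : (algebraMap ℂ (Matrix (Fin n) (Fin n) ℂ) μ - x).mulVec (ξs : Fin n → ℂ) = 0 := by
      rw [Matrix.sub_mulVec, Algebra.algebraMap_eq_smul_one, Matrix.smul_mulVec,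
        Matrix.one_mulVec, hxe, sub_self]
    apply hξ0
    calc (ξs : Fin n → ℂ) = (1 : Matrix (Fin n) (Fin n) ℂ).mulVec (ξs : Fin n → ℂ) :=
          (Matrix.one_mulVec _).symm
      _ = (N * (algebraMap ℂ (Matrix (Fin n) (Fin n) ℂ) μ - x)).mulVec (ξs : Fin n → ℂ) := by
          rw [hN]
      _ = N.mulVec ((algebraMap ℂ (Matrix (Fin n) (Fin n) ℂ) μ - x).mulVec (ξs : Fin n → ℂ)) :=
          (Matrix.mulVec_mulVec _ _ _).symm
      _ = 0 := by rw [h6, Matrix.mulVec_zero]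
  · rw [← hvξ, Matrix.mulVec_mulVec, hTy', hvξ]
  · rw [← hvξ, Matrix.mulVec_mulVec, hky, ← Matrix.mulVec_mulVec, hvξ, hxe]
end
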